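/- There is a universal constant c such that for every finite alphabet Γ, every bottom-up deterministic tree automaton A = (Q, F, ι, δ) on full binary trees over the alphabet Γ̄ = Γ × {0,1}, and every full binary Γ-tree T, there exists a monotone circuit C whose variable gates are in bijection with the leaves of T, which is a d-DNNF in zero-suppressed semantics, such that S(C) equals the assignment set α(A, T) (identifying each assignment with the corresponding set of leaves of T), and such that |C| ≤ c · |Γ| · |Q|² · |T|. -/

import Mathlib

/-- The type of a gate in a monotone circuit: variable gate, AND-gate, or OR-gate. -/
inductive GateType : Type
  | var
  | and
  | or
  deriving DecidableEq

/-- A monotone circuit: a finite DAG of gates with wires, a distinguished output gate,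
each gate labeled as a variable gate (carrying a variable label in `ι`), an AND-gate,
or an OR-gate.  Variable gates have no inputs, and the wire relation is acyclic. -/
structure Circuit (ι : Type) [DecidableEq ι] where
  Gate : Type
  fintypeGate : Fintype Gate
  decEqGate : DecidableEq Gate
  wire : Gate → Gate → Prop
  decWire : ∀ a b : Gate, Decidable (wire a b)
  typ : Gate → GateType
  vlab : Gate → ι
  output : Gate
  var_no_input : ∀ g g' : Gate, typ g' = GateType.var → ¬ wire g g'
  acyclic : ∀ g : Gate, ¬ Relation.TransGen wire g g

attribute [instance] Circuit.fintypeGate Circuit.decEqGate Circuit.decWire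

namespace Circuit

variable {ι : Type} [DecidableEq ι]

/-- The inputs of a gate `g`: the gates with a wire to `g`. -/
def inputs (C : Circuit ι) (g : C.Gate) : Finset C.Gate :=
  Finset.univ.filter fun g' => C.wire g' g

/-- The fan-in of a gate: its number of inputs. -/
def fanin (C : Circuit ι) (g : C.Gate) : ℕ :=
  (C.inputs g).card

/-- The gates that `g` is an input of. -/
def outs (C : Circuit ι) (g : C.Gate) : Finset C.Gate :=
  Finset.univ.filter fun g' => C.wire g g'

/-- The size of a circuit: its number of gates plus its number of wires. -/
noncomputable def size (C : Circuit ι) : ℕ :=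
  Fintype.card C.Gate + {p : C.Gate × C.Gate | C.wire p.1 p.2}.ncard

/-- Zero-suppressed semantics: `Captures C g t` says that the assignment `t`
(a finite set of variables) belongs to the set captured by gate `g`, defined bottom-up:
a variable gate captures exactly its own singleton; an AND-gate captures the unions of
assignments captured by its inputs (one from each input); an OR-gate captures the union
of the sets captured by its inputs. -/
inductive Captures (C : Circuit ι) : C.Gate → Finset ι → Prop
  | var (g : C.Gate) (h : C.typ g = GateType.var) : Captures C g {C.vlab g}
  | and (g : C.Gate) (h : C.typ g = GateType.and) (f : C.Gate → Finset ι)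
      (hf : ∀ g' ∈ C.inputs g, Captures C g' (f g')) :
      Captures C g ((C.inputs g).biUnion f)
  | or (g : C.Gate) (h : C.typ g = GateType.or) (g' : C.Gate) (hg' : g' ∈ C.inputs g)
      (t : Finset ι) (ht : Captures C g' t) : Captures C g t

/-- The set `S(g)` of assignments captured by a gate `g` in zero-suppressed semantics. -/
def S (C : Circuit ι) (g : C.Gate) : Set (Finset ι) :=
  {t | C.Captures g t}

/-- The captured set `S(C)` of the circuit: the captured set of its output gate. -/
def captured (C : Circuit ι) : Set (Finset ι) :=
  C.S C.output

/-- `C.Reaches g g'` holds when there is a (possibly empty) directed path of wires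
from `g` to `g'`. -/
def Reaches (C : Circuit ι) : C.Gate → C.Gate → Prop :=
  Relation.ReflTransGen C.wire

/-- An AND-gate is decomposable if no variable gate has directed paths to two distinct
inputs of it. -/
def DecomposableAnd (C : Circuit ι) (g : C.Gate) : Prop :=
  ∀ v g1 g2 : C.Gate, C.typ v = GateType.var → g1 ∈ C.inputs g → g2 ∈ C.inputs g →
    g1 ≠ g2 → C.Reaches v g1 → C.Reaches v g2 → False

/-- An OR-gate is deterministic if the captured sets of any two distinct inputs
are disjoint. -/
def DeterministicOr (C : Circuit ι) (g : C.Gate) : Prop :=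
  ∀ g1 g2 : C.Gate, g1 ∈ C.inputs g → g2 ∈ C.inputs g → g1 ≠ g2 →
    Disjoint (C.S g1) (C.S g2)

/-- A circuit is a d-DNNF in zero-suppressed semantics if every AND-gate is decomposable
and every OR-gate is deterministic. -/
def dDNNF (C : Circuit ι) : Prop :=
  (∀ g : C.Gate, C.typ g = GateType.and → C.DecomposableAnd g) ∧
  (∀ g : C.Gate, C.typ g = GateType.or → C.DeterministicOr g)

/-- Distinct variable gates carry distinct variable labels (i.e., variables can be
identified with variable gates, as in the paper). -/
def VarInj (C : Circuit ι) : Prop :=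
  Set.InjOn C.vlab {g : C.Gate | C.typ g = GateType.var}

/-- `C` is ∅-pruned: every gate captures a nonempty set (no gate is unsatisfiable). -/
def EmptyPruned (C : Circuit ι) : Prop :=
  ∀ g : C.Gate, (C.S g).Nonempty

/-- `C` is {}-pruned: no gate captures a set containing the empty assignment. -/
def ZeroPruned (C : Circuit ι) : Prop :=
  ∀ g : C.Gate, (∅ : Finset ι) ∉ C.S g

/-- An exit: an OR-gate having an input which is not an OR-gate. -/
def IsExit (C : Circuit ι) (g : C.Gate) : Prop :=
  C.typ g = GateType.or ∧ ∃ g' ∈ C.inputs g, C.typ g' ≠ GateType.or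

/-- A normal circuit: arity-two, ∅-pruned, {}-pruned, collapsed, and discriminative. -/
def Normal (C : Circuit ι) : Prop :=
  (∀ g : C.Gate, C.fanin g ≤ 2) ∧
  C.EmptyPruned ∧
  C.ZeroPruned ∧
  (∀ g : C.Gate, C.typ g = GateType.and → C.fanin g ≠ 1) ∧
  (∀ g : C.Gate, C.IsExit g →
    C.fanin g = 1 ∧ (C.outs g).card = 1 ∧ ∀ g' : C.Gate, C.wire g g' → C.typ g' = GateType.or)

/-- A wire both of whose endpoints are OR-gates. -/
def orWire (C : Circuit ι) (a b : C.Gate) : Prop :=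
  C.wire a b ∧ C.typ a = GateType.or ∧ C.typ b = GateType.or

/-- The OR-component of an OR-gate `g`: the OR-gates connected to `g` by paths
traversing, in either direction, only wires both of whose endpoints are OR-gates. -/
def orComponent (C : Circuit ι) (g : C.Gate) : Set C.Gate :=
  {g' : C.Gate | C.typ g' = GateType.or ∧
    Relation.ReflTransGen (fun x y => C.orWire x y ∨ C.orWire y x) g g'}

/-- The exits of an OR-gate `g`: the exits of its OR-component having a directed path
to `g` within the OR-component. -/
def exitsOf (C : Circuit ι) (g : C.Gate) : Set C.Gate :=
  {e : C.Gate | C.IsExit e ∧ Relation.ReflTransGen C.orWire e g}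

/-- An OR-path of `C`: a directed path (of length at least one) all of whose
intermediate gates are OR-gates. -/
inductive OrPath (C : Circuit ι) : C.Gate → C.Gate → Prop
  | single (a b : C.Gate) (h : C.wire a b) : OrPath C a b
  | step (a m b : C.Gate) (h : C.wire a m) (hm : C.typ m = GateType.or)
      (hp : OrPath C m b) : OrPath C a b

/-- A gate is 0-valid if it captures the empty assignment. -/
def ZeroValid (C : Circuit ι) (g : C.Gate) : Prop :=
  (∅ : Finset ι) ∈ C.S g

/-- A wire `(g, g')` is pure if `g'` is an OR-gate, or `g'` is an AND-gate all of whose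
other inputs are 0-valid. -/
def PureWire (C : Circuit ι) (g g' : C.Gate) : Prop :=
  C.wire g g' ∧
    (C.typ g' = GateType.or ∨
      (C.typ g' = GateType.and ∧ ∀ h ∈ C.inputs g', h ≠ g → C.ZeroValid h))

/-- A gate `g` is upwards-deterministic if it is unsatisfiable or there is at most one
gate `g'` such that `(g, g')` is a pure wire. -/
def UpDetGate (C : Circuit ι) (g : C.Gate) : Prop :=
  C.S g = ∅ ∨ ∀ g1 g2 : C.Gate, C.PureWire g g1 → C.PureWire g g2 → g1 = g2

/-- A circuit is upwards-deterministic if all its AND-gates and OR-gates are. -/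
def UpwardsDeterministic (C : Circuit ι) : Prop :=
  ∀ g : C.Gate, (C.typ g = GateType.and ∨ C.typ g = GateType.or) → C.UpDetGate g

end Circuit

/-- A full binary tree over an alphabet `Γ`: every internal node has exactly two
(ordered) children, and every node carries a label in `Γ`. -/
inductive BTree (Γ : Type) : Type
  | leaf (a : Γ) : BTree Γ
  | node (a : Γ) (l r : BTree Γ) : BTree Γ

namespace BTree

/-- The number of nodes of the tree. -/
def size {Γ : Type} : BTree Γ → ℕ
  | .leaf _ => 1
  | .node _ l r => 1 + l.size + r.size

/-- Leaves of the tree are identified by their positions: lists of Booleans describing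
the path from the root (`false` = first child, `true` = second child). -/
def IsLeafPos {Γ : Type} : BTree Γ → List Bool → Prop
  | .leaf _, [] => True
  | .leaf _, _ :: _ => False
  | .node _ _ _, [] => False
  | .node _ l _, false :: p => l.IsLeafPos p
  | .node _ _ r, true :: p => r.IsLeafPos p

/-- `T.applyVal ν` is the tree `ν(T)` over `Γ × Bool` obtained from `T` by relabeling
every leaf at position `p` from `a` to `(a, ν p)` and every internal node from `a`
to `(a, false)`, where `ν` is a leaf valuation given by positions. -/
def applyVal {Γ : Type} : BTree Γ → (List Bool → Bool) → BTree (Γ × Bool)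
  | .leaf a, ν => .leaf (a, ν [])
  | .node a l r, ν =>
      .node (a, false) (l.applyVal fun p => ν (false :: p))
        (r.applyVal fun p => ν (true :: p))

end BTree

/-- A bottom-up deterministic tree automaton on full binary trees over alphabet `Δ`:
states `Q`, accepting states `F`, initialization function `init`, and transition
function `delta`, which is symmetric in its two state arguments so that the order of
children never matters. -/
structure BDTA (Δ : Type) where
  Q : Type
  fintypeQ : Fintype Q
  F : Set Q
  init : Δ → Q
  delta : Δ → Q → Q → Q
  symm : ∀ (a : Δ) (q1 q2 : Q), delta a q1 q2 = delta a q2 q1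

attribute [instance] BDTA.fintypeQ

namespace BDTA

/-- The run of the automaton: the state reached at the root of the tree. -/
def run {Δ : Type} (A : BDTA Δ) : BTree Δ → A.Q
  | .leaf a => A.init a
  | .node a l r => A.delta a (A.run l) (A.run r)

/-- The automaton accepts a tree if its run reaches an accepting state at the root. -/
def Accepts {Δ : Type} (A : BDTA Δ) (t : BTree Δ) : Prop :=
  A.run t ∈ A.F

end BDTA

/-- The assignment set `α(A, T)` of a `Γ̄`-bDTA `A` on a full binary `Γ`-tree `T`:
the family of the sets of leaves (identified by their positions) set to `true` by the
leaf valuations `ν` such that `A` accepts `ν(T)`. -/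
def assignSet {Γ : Type} (A : BDTA (Γ × Bool)) (T : BTree Γ) : Set (Finset (List Bool)) :=
  {s | ∃ ν : List Bool → Bool, A.Accepts (T.applyVal ν) ∧
    ∀ p : List Bool, p ∈ s ↔ (T.IsLeafPos p ∧ ν p = true)}


namespace Stmt13

variable {Γ : Type}

/-! ### Positions in a tree -/

def leafFin : BTree Γ → Finset (List Bool)
  | .leaf _ => {[]}
  | .node _ l r => (leafFin l).image (List.cons false) ∪ (leafFin r).image (List.cons true)

def nodeFin : BTree Γ → Finset (List Bool)
  | .leaf _ => {[]}
  | .node _ l r =>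
      insert [] ((nodeFin l).image (List.cons false) ∪ (nodeFin r).image (List.cons true))

def subAt : BTree Γ → List Bool → Option (BTree Γ)
  | t, [] => some t
  | .leaf _, _ :: _ => none
  | .node _ l _, false :: p => subAt l p
  | .node _ _ r, true :: p => subAt r p

@[simp] lemma subAt_nil (t : BTree Γ) : subAt t [] = some t := by cases t <;> rfl

lemma subAt_append (t : BTree Γ) (p r : List Bool) :
    subAt t (p ++ r) = (subAt t p).bind (fun u => subAt u r) := by
  induction p generalizing t with
  | nil => simp
  | cons b p ih =>
    cases t with
    | leaf a => cases b <;> rfl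
    | node a l r' => cases b <;> simp [subAt, ih]

lemma mem_leafFin {t : BTree Γ} {p : List Bool} :
    p ∈ leafFin t ↔ ∃ a, subAt t p = some (.leaf a) := by
  induction t generalizing p with
  | leaf a => cases p <;> simp [leafFin, subAt]
  | node a l r ihl ihr =>
    cases p with
    | nil => simp [leafFin, subAt]
    | cons b p => cases b <;> simp [leafFin, subAt, ihl, ihr]

lemma mem_nodeFin {t : BTree Γ} {p : List Bool} :
    p ∈ nodeFin t ↔ ∃ u, subAt t p = some u := by
  induction t generalizing p with
  | leaf a => cases p <;> simp [nodeFin, subAt]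
  | node a l r ihl ihr =>
    cases p with
    | nil => simp [nodeFin, subAt]
    | cons b p => cases b <;> simp [nodeFin, subAt, ihl, ihr]

lemma leafFin_subset_nodeFin (t : BTree Γ) : leafFin t ⊆ nodeFin t := by
  intro p hp
  rcases mem_leafFin.1 hp with ⟨a, ha⟩
  exact mem_nodeFin.2 ⟨_, ha⟩

lemma isLeafPos_iff {t : BTree Γ} {p : List Bool} : t.IsLeafPos p ↔ p ∈ leafFin t := by
  induction t generalizing p with
  | leaf a => cases p <;> simp [BTree.IsLeafPos, leafFin]
  | node a l r ihl ihr =>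
    cases p with
    | nil => simp [BTree.IsLeafPos, leafFin]
    | cons b p => cases b <;> simp [BTree.IsLeafPos, leafFin, ihl, ihr]

lemma length_lt_size {t : BTree Γ} {p : List Bool} (h : p ∈ nodeFin t) :
    p.length < t.size := by
  induction t generalizing p with
  | leaf a =>
    simp [nodeFin] at h
    simp [h, BTree.size]
  | node a l r ihl ihr =>
    simp [nodeFin] at h
    rcases h with h | ⟨x, hx, hxp⟩ | ⟨x, hx, hxp⟩
    · simp [h, BTree.size]
    · subst hxp; have := ihl hx; simp [BTree.size]; omega
    · subst hxp; have := ihr hx; simp [BTree.size]; omega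

lemma card_nodeFin_le (t : BTree Γ) : (nodeFin t).card ≤ t.size := by
  induction t with
  | leaf a => simp [nodeFin, BTree.size]
  | node a l r ihl ihr =>
    calc (nodeFin (BTree.node a l r)).card
        ≤ ((nodeFin l).image (List.cons false) ∪ (nodeFin r).image (List.cons true)).card + 1 :=
          Finset.card_insert_le _ _
      _ ≤ ((nodeFin l).image (List.cons false)).card + ((nodeFin r).image (List.cons true)).card
            + 1 := by have := Finset.card_union_le ((nodeFin l).image (List.cons false))
                        ((nodeFin r).image (List.cons true)); omega
      _ ≤ (nodeFin l).card + (nodeFin r).card + 1 := by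
          have := Finset.card_image_le (s := nodeFin l) (f := List.cons false)
          have := Finset.card_image_le (s := nodeFin r) (f := List.cons true)
          omega
      _ ≤ _ := by simp [BTree.size]; omega

lemma nil_mem_nodeFin (t : BTree Γ) : [] ∈ nodeFin t := by
  cases t <;> simp [nodeFin]

lemma one_le_size (t : BTree Γ) : 1 ≤ t.size := by
  cases t <;> simp [BTree.size] <;> omega

def rootLab : BTree Γ → Γ
  | .leaf a => a
  | .node a _ _ => a


/-! ### The circuit -/

variable (A : BDTA (Γ × Bool)) (T : BTree Γ)

abbrev LPos := {p : List Bool // p ∈ leafFin T}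
abbrev NPos := {p : List Bool // p ∈ nodeFin T}

/-- Gates: output, empty-AND, variable gates, state gates (OR), transition gates (AND). -/
abbrev Gt : Type :=
  (Unit ⊕ Unit) ⊕ (LPos T ⊕ (NPos T × A.Q ⊕ NPos T × A.Q × A.Q))

noncomputable instance : DecidableEq (Gt A T) := Classical.decEq _

variable {A T}

def gOut : Gt A T := Sum.inl (Sum.inl ())
def gEmp : Gt A T := Sum.inl (Sum.inr ())
def gVar (p : LPos T) : Gt A T := Sum.inr (Sum.inl p)
def gSt (p : NPos T) (q : A.Q) : Gt A T := Sum.inr (Sum.inr (Sum.inl (p, q)))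
def gAnd (p : NPos T) (q1 q2 : A.Q) : Gt A T := Sum.inr (Sum.inr (Sum.inr (p, q1, q2)))

variable (A T)

def typG : Gt A T → GateType
  | .inl (.inl _) => .or
  | .inl (.inr _) => .and
  | .inr (.inl _) => .var
  | .inr (.inr (.inl _)) => .or
  | .inr (.inr (.inr _)) => .and

def vlabG : Gt A T → List Bool
  | .inr (.inl p) => p.1
  | _ => []

def wireG : Gt A T → Gt A T → Prop
  | .inr (.inl pv), .inr (.inr (.inl (p, q))) =>
      pv.1 = p.1 ∧ ∃ a, subAt T p.1 = some (.leaf a) ∧ A.init (a, true) = q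
  | .inl (.inr _), .inr (.inr (.inl (p, q))) =>
      ∃ a, subAt T p.1 = some (.leaf a) ∧ A.init (a, false) = q
  | .inr (.inr (.inr (p', q1, q2))), .inr (.inr (.inl (p, q))) =>
      p'.1 = p.1 ∧ ∃ a l r, subAt T p.1 = some (.node a l r) ∧ A.delta (a, false) q1 q2 = q
  | .inr (.inr (.inl (pc, qc))), .inr (.inr (.inr (p, q1, q2))) =>
      (∃ a l r, subAt T p.1 = some (.node a l r)) ∧
        ((pc.1 = p.1 ++ [false] ∧ qc = q1) ∨ (pc.1 = p.1 ++ [true] ∧ qc = q2))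
  | .inr (.inr (.inl (p, q))), .inl (.inl _) => p.1 = [] ∧ q ∈ A.F
  | _, _ => False

def rankG : Gt A T → ℕ
  | .inl (.inl _) => 3 * T.size + 4
  | .inl (.inr _) => 0
  | .inr (.inl _) => 0
  | .inr (.inr (.inl (p, _))) => 3 * (T.size - p.1.length) + 3
  | .inr (.inr (.inr (p, _, _))) => 3 * (T.size - p.1.length) + 2

variable {A T}

lemma rank_lt_of_wire {g g' : Gt A T} (h : wireG A T g g') : rankG A T g < rankG A T g' := by
  rcases g with (⟨⟩ | ⟨⟩) | (pv | ⟨p, q⟩ | ⟨p, q1, q2⟩) <;>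
    rcases g' with (⟨⟩ | ⟨⟩) | (pv' | ⟨p', q'⟩ | ⟨p', q1', q2'⟩) <;>
      simp [wireG, rankG] at h ⊢
  · -- st → and : p.1 = p'.1 ++ [b]
    have hlt := length_lt_size p.2
    rcases h.2 with ⟨h1, _⟩ | ⟨h1, _⟩ <;> · rw [h1] at hlt ⊢; simp at hlt ⊢; omega
  · -- and → st
    obtain ⟨h1, _⟩ := h
    rw [h1]; omega

variable (A T)

@[reducible] noncomputable def circ : Circuit (List Bool) where
  Gate := Gt A T
  fintypeGate := inferInstance
  decEqGate := Classical.decEq _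
  wire := wireG A T
  decWire := fun _ _ => Classical.dec _
  typ := typG A T
  vlab := vlabG A T
  output := gOut
  var_no_input := by
    intro g g' hg' hw
    rcases g' with (⟨⟩ | ⟨⟩) | (pv' | ⟨p', q'⟩ | ⟨p', q1', q2'⟩) <;>
      simp [typG] at hg' <;>
    rcases g with (⟨⟩ | ⟨⟩) | (pv | ⟨p, q⟩ | ⟨p, q1, q2⟩) <;> simp [wireG] at hw
  acyclic := by
    intro g hg
    have : ∀ a b : Gt A T, Relation.TransGen (wireG A T) a b → rankG A T a < rankG A T b := by
      intro a b h
      induction h with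
      | single h => exact rank_lt_of_wire h
      | tail _ h ih => exact ih.trans (rank_lt_of_wire h)
    exact absurd (this g g hg) (lt_irrefl _)

variable {A T}

lemma mem_inputs {g g' : (circ A T).Gate} : g' ∈ (circ A T).inputs g ↔ wireG A T g' g := by
  simp [Circuit.inputs, circ]

/-! ### Semantics -/

variable (A)

def runp (t : BTree Γ) (p : List Bool) (s : Finset (List Bool)) : A.Q :=
  A.run (t.applyVal fun r => decide ((p ++ r) ∈ s))

def SemRel (t : BTree Γ) (p : List Bool) (s : Finset (List Bool)) (q : A.Q) : Prop :=
  (∀ x ∈ s, ∃ r, t.IsLeafPos r ∧ x = p ++ r) ∧ runp A t p s = q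

lemma applyVal_congr (t : BTree Γ) {ν ν' : List Bool → Bool}
    (h : ∀ r, t.IsLeafPos r → ν r = ν' r) : t.applyVal ν = t.applyVal ν' := by
  induction t generalizing ν ν' with
  | leaf a => simp only [BTree.applyVal]; rw [h [] trivial]
  | node a l r ihl ihr =>
    simp only [BTree.applyVal]
    rw [ihl (fun r hr => h (false :: r) hr), ihr (fun r hr => h (true :: r) hr)]

variable {A}

lemma runp_congr {t : BTree Γ} {p : List Bool} {s s' : Finset (List Bool)}
    (h : ∀ r, t.IsLeafPos r → ((p ++ r ∈ s) ↔ (p ++ r ∈ s'))) :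
    runp A t p s = runp A t p s' := by
  unfold runp
  rw [applyVal_congr t (ν := fun r => decide (p ++ r ∈ s)) (ν' := fun r => decide (p ++ r ∈ s'))
    (fun r hr => by rw [decide_eq_decide]; exact h r hr)]

lemma run_node (a : Γ) (l r : BTree Γ) (ν : List Bool → Bool) :
    A.run ((BTree.node a l r).applyVal ν) =
      A.delta (a, false) (A.run (l.applyVal fun p => ν (false :: p)))
        (A.run (r.applyVal fun p => ν (true :: p))) := rfl

lemma runp_leaf (a : Γ) (p : List Bool) (s : Finset (List Bool)) :
    runp A (BTree.leaf a) p s = A.init (a, decide (p ∈ s)) := by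
  simp [runp, BTree.applyVal, BDTA.run]

lemma runp_node (a : Γ) (l r : BTree Γ) (p : List Bool) (s : Finset (List Bool)) :
    runp A (BTree.node a l r) p s =
      A.delta (a, false) (runp A l (p ++ [false]) s) (runp A r (p ++ [true]) s) := by
  unfold runp
  rw [run_node]
  congr 2 <;> exact applyVal_congr _ (fun r hr => by simp)

lemma ne_append_of_prefix_other {p x r : List Bool} {b b' : Bool} (hbb : b ≠ b')
    (hx : x = (p ++ [b']) ++ r) (r' : List Bool) : x ≠ (p ++ [b]) ++ r' := by
  subst hx
  intro h
  rw [List.append_assoc, List.append_assoc] at h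
  have := List.append_cancel_left h
  simp at this
  exact hbb this.1.symm

lemma runp_union_left {l : BTree Γ} {p : List Bool} {s1 s2 : Finset (List Bool)}
    (h2 : ∀ x ∈ s2, ∃ r, x = (p ++ [true]) ++ r) :
    runp A l (p ++ [false]) (s1 ∪ s2) = runp A l (p ++ [false]) s1 := by
  apply runp_congr
  intro r _
  simp only [Finset.mem_union]
  constructor
  · rintro (h | h)
    · exact h
    · rcases h2 _ h with ⟨r', hr'⟩
      exact absurd rfl (ne_append_of_prefix_other (by simp) hr' r)
  · exact Or.inl

lemma runp_union_right {l : BTree Γ} {p : List Bool} {s1 s2 : Finset (List Bool)}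
    (h1 : ∀ x ∈ s1, ∃ r, x = (p ++ [false]) ++ r) :
    runp A l (p ++ [true]) (s1 ∪ s2) = runp A l (p ++ [true]) s2 := by
  apply runp_congr
  intro r _
  simp only [Finset.mem_union]
  constructor
  · rintro (h | h)
    · rcases h1 _ h with ⟨r', hr'⟩
      exact absurd rfl (ne_append_of_prefix_other (by simp) hr' r)
    · exact h
  · exact Or.inr

/-- The intended captured set of each gate. -/
def Spec : Gt A T → Set (Finset (List Bool))
  | .inl (.inl _) => assignSet A T
  | .inl (.inr _) => {∅}
  | .inr (.inl p) => {{p.1}}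
  | .inr (.inr (.inl (p, q))) => {s | ∃ t, subAt T p.1 = some t ∧ SemRel A t p.1 s q}
  | .inr (.inr (.inr (p, q1, q2))) =>
      {s | ((∃ a, subAt T p.1 = some (.leaf a)) ∧ s = ∅) ∨
        (∃ a l r, subAt T p.1 = some (.node a l r) ∧
          ∃ s1 s2, SemRel A l (p.1 ++ [false]) s1 q1 ∧ SemRel A r (p.1 ++ [true]) s2 q2 ∧
            s = s1 ∪ s2)}

/-! ### Input characterizations -/

lemma stf_mem {p : List Bool} {a : Γ} {l r : BTree Γ} (h : subAt T p = some (.node a l r)) :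
    p ++ [false] ∈ nodeFin T :=
  mem_nodeFin.2 ⟨l, by rw [subAt_append, h]; simp [subAt]⟩

lemma stt_mem {p : List Bool} {a : Γ} {l r : BTree Γ} (h : subAt T p = some (.node a l r)) :
    p ++ [true] ∈ nodeFin T :=
  mem_nodeFin.2 ⟨r, by rw [subAt_append, h]; simp [subAt]⟩

lemma subAt_child_false {p : List Bool} {a : Γ} {l r : BTree Γ}
    (h : subAt T p = some (.node a l r)) : subAt T (p ++ [false]) = some l := by
  rw [subAt_append, h]; simp [subAt]

lemma subAt_child_true {p : List Bool} {a : Γ} {l r : BTree Γ}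
    (h : subAt T p = some (.node a l r)) : subAt T (p ++ [true]) = some r := by
  rw [subAt_append, h]; simp [subAt]

lemma inputs_emp : (circ A T).inputs (Sum.inl (Sum.inr ())) = ∅ := by
  rw [Finset.eq_empty_iff_forall_notMem]
  intro g' hg'
  rw [mem_inputs] at hg'
  rcases g' with (⟨⟩ | ⟨⟩) | (pv | ⟨pc, qc⟩ | ⟨pc, qc1, qc2⟩) <;> simp [wireG] at hg'

lemma inputs_and_leaf (p : NPos T) (q1 q2 : A.Q) {a : Γ}
    (h : subAt T p.1 = some (.leaf a)) :
    (circ A T).inputs (Sum.inr (Sum.inr (Sum.inr (p, q1, q2)))) = ∅ := by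
  rw [Finset.eq_empty_iff_forall_notMem]
  intro g' hg'
  rw [mem_inputs] at hg'
  rcases g' with (⟨⟩ | ⟨⟩) | (pv | ⟨pc, qc⟩ | ⟨pc, qc1, qc2⟩) <;> simp [wireG, h] at hg'

lemma inputs_and_node (p : NPos T) (q1 q2 : A.Q) {a : Γ} {l r : BTree Γ}
    (h : subAt T p.1 = some (.node a l r)) :
    (circ A T).inputs (Sum.inr (Sum.inr (Sum.inr (p, q1, q2)))) =
      ({gSt ⟨p.1 ++ [false], stf_mem h⟩ q1, gSt ⟨p.1 ++ [true], stt_mem h⟩ q2} :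
        Finset (Gt A T)) := by
  ext g'
  rw [mem_inputs]
  rcases g' with (⟨⟩ | ⟨⟩) | (pv | ⟨pc, qc⟩ | ⟨pc, qc1, qc2⟩) <;>
    simp [wireG, gSt, h, Subtype.ext_iff, Prod.ext_iff] <;> tauto

lemma stf_ne_stt (p : NPos T) (q1 q2 : A.Q) {hf : p.1 ++ [false] ∈ nodeFin T}
    {ht : p.1 ++ [true] ∈ nodeFin T} :
    gSt (A := A) ⟨p.1 ++ [false], hf⟩ q1 ≠ gSt ⟨p.1 ++ [true], ht⟩ q2 := by
  simp [gSt, Subtype.ext_iff]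

/-! ### Captures implies Spec -/

lemma captures_spec {g : (circ A T).Gate} {s : Finset (List Bool)}
    (h : (circ A T).Captures g s) : s ∈ Spec g := by
  induction h with
  | var g hg =>
    rcases g with (⟨⟩ | ⟨⟩) | (pv | ⟨p, q⟩ | ⟨p, q1, q2⟩) <;> simp [circ, typG] at hg ⊢
    simp [circ, vlabG, Spec]
  | and g hg f hf ih =>
    rcases g with (⟨⟩ | ⟨⟩) | (pv | ⟨p, q⟩ | ⟨p, q1, q2⟩) <;> simp [circ, typG] at hg
    · -- gEmp
      rw [inputs_emp]
      simp only [Finset.biUnion_empty]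
      show _ ∈ ({∅} : Set (Finset (List Bool)))
      rfl
    · -- gAnd
      obtain ⟨u, hu⟩ := mem_nodeFin.1 p.2
      cases u with
      | leaf a =>
        rw [inputs_and_leaf p q1 q2 hu]
        simp only [Finset.biUnion_empty]
        simp only [Spec, Set.mem_setOf_eq]
        exact Or.inl ⟨⟨a, hu⟩, by simp⟩
      | node a l r =>
        rw [inputs_and_node p q1 q2 hu, Finset.biUnion_insert, Finset.singleton_biUnion]
        have hm1 : gSt (A := A) ⟨p.1 ++ [false], stf_mem hu⟩ q1 ∈
            (circ A T).inputs (Sum.inr (Sum.inr (Sum.inr (p, q1, q2)))) := by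
          rw [inputs_and_node p q1 q2 hu]
          exact Finset.mem_insert_self _ _
        have hm2 : gSt (A := A) ⟨p.1 ++ [true], stt_mem hu⟩ q2 ∈
            (circ A T).inputs (Sum.inr (Sum.inr (Sum.inr (p, q1, q2)))) := by
          rw [inputs_and_node p q1 q2 hu]
          exact Finset.mem_insert_of_mem (Finset.mem_singleton_self _)
        have h1 := ih _ hm1
        have h2 := ih _ hm2
        simp only [Spec, gSt, Set.mem_setOf_eq] at h1 h2
        obtain ⟨t1, ht1, hsem1⟩ := h1
        obtain ⟨t2, ht2, hsem2⟩ := h2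
        rw [subAt_child_false hu] at ht1
        rw [subAt_child_true hu] at ht2
        injection ht1 with ht1
        injection ht2 with ht2
        subst ht1
        subst ht2
        simp only [Spec, Set.mem_setOf_eq]
        exact Or.inr ⟨a, l, r, hu, _, _, hsem1, hsem2, rfl⟩
  | or g hg g' hg' t ht ih =>
    rw [mem_inputs] at hg'
    rcases g with (⟨⟩ | ⟨⟩) | (pv | ⟨p, q⟩ | ⟨p, q1, q2⟩) <;> simp [circ, typG] at hg
    · -- gOut
      rcases g' with (⟨⟩ | ⟨⟩) | (pv' | ⟨p', q'⟩ | ⟨p', q1', q2'⟩) <;> simp [wireG] at hg'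
      obtain ⟨hp', hq'⟩ := hg'
      simp only [Spec, Set.mem_setOf_eq] at ih
      obtain ⟨u, hu, helem, hrun⟩ := ih
      rw [hp'] at hu helem hrun
      rw [subAt_nil] at hu
      injection hu with hu
      subst hu
      simp only [Spec, assignSet, Set.mem_setOf_eq]
      refine ⟨fun x => decide (x ∈ t), ?_, ?_⟩
      · show A.run _ ∈ A.F
        have he : T.applyVal (fun x => decide (x ∈ t)) =
            T.applyVal (fun r => decide ([] ++ r ∈ t)) :=
          applyVal_congr T (fun r _ => by simp)
        rw [he]
        show runp A T [] t ∈ A.F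
        rw [hrun]
        exact hq'
      · intro x
        constructor
        · intro hx
          obtain ⟨r, hr, hxr⟩ := helem x hx
          simp only [List.nil_append] at hxr
          subst hxr
          exact ⟨hr, by simp [hx]⟩
        · rintro ⟨-, hd⟩
          simpa using hd
    · -- gSt p q
      rcases g' with (⟨⟩ | ⟨⟩) | (pv' | ⟨p', q'⟩ | ⟨p', q1', q2'⟩) <;> simp [wireG] at hg'
      · -- gEmp input
        obtain ⟨a, ha, hq⟩ := hg'
        have ht' : t = ∅ := ih
        subst ht'
        simp only [Spec, Set.mem_setOf_eq]
        refine ⟨.leaf a, ha, fun x hx => absurd hx (by simp), ?_⟩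
        rw [runp_leaf]
        simpa using hq
      · -- gVar input
        obtain ⟨hpv, a, ha, hq⟩ := hg'
        have ht' : t = {pv'.1} := ih
        subst ht'
        simp only [Spec, Set.mem_setOf_eq]
        refine ⟨.leaf a, ha, ?_, ?_⟩
        · intro x hx
          simp only [Finset.mem_singleton] at hx
          exact ⟨[], trivial, by simp [hx, hpv]⟩
        · rw [runp_leaf]
          have hm : p.1 ∈ ({pv'.1} : Finset (List Bool)) := by simp [hpv]
          simp [hm, hq]
      · -- gAnd input
        obtain ⟨hp', a, hex, hq⟩ := hg'
        obtain ⟨l, r, hsub⟩ := hex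
        subst hq
        simp only [Spec, Set.mem_setOf_eq] at ih ⊢
        rw [hp'] at ih
        rcases ih with ⟨⟨a', ha'⟩, -⟩ | ⟨a', l', r', hsub', s1, s2, hs1, hs2, rfl⟩
        · rw [hsub] at ha'
          exact absurd ha' (by simp)
        · rw [hsub] at hsub'
          injection hsub' with hsub'
          cases hsub'
          refine ⟨.node a l r, hsub, ?_, ?_⟩
          · intro x hx
            rcases Finset.mem_union.1 hx with hx | hx
            · obtain ⟨rr, hrr, hxr⟩ := hs1.1 x hx
              exact ⟨false :: rr, hrr, by simp [hxr]⟩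
            · obtain ⟨rr, hrr, hxr⟩ := hs2.1 x hx
              exact ⟨true :: rr, hrr, by simp [hxr]⟩
          · rw [runp_node]
            rw [runp_union_left (fun x hx => by
                  obtain ⟨rr, -, hxr⟩ := hs2.1 x hx
                  exact ⟨rr, hxr⟩),
              runp_union_right (fun x hx => by
                  obtain ⟨rr, -, hxr⟩ := hs1.1 x hx
                  exact ⟨rr, hxr⟩)]
            rw [hs1.2, hs2.2]

/-! ### Spec implies Captures -/

lemma captures_emp : (circ A T).Captures (Sum.inl (Sum.inr ())) ∅ := by
  have hcap := Circuit.Captures.and (C := circ A T) (Sum.inl (Sum.inr ())) rfl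
    (fun _ => ∅) (fun g' hg' => by
      rw [inputs_emp] at hg'
      exact absurd hg' (Finset.notMem_empty _))
  rwa [inputs_emp, Finset.biUnion_empty] at hcap

lemma spec_captures {g : Gt A T} {s : Finset (List Bool)} (hs : s ∈ Spec g) :
    (circ A T).Captures g s := by
  suffices H : ∀ n (g : Gt A T) (s : Finset (List Bool)),
      rankG A T g < n → s ∈ Spec g → (circ A T).Captures g s from
    H (rankG A T g + 1) g s (Nat.lt_succ_self _) hs
  intro n
  induction n with
  | zero => exact fun g s h => absurd h (Nat.not_lt_zero _)
  | succ n ih =>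
    intro g s hrank hs
    rcases g with (⟨⟩ | ⟨⟩) | (pv | ⟨p, q⟩ | ⟨p, q1, q2⟩)
    · -- gOut
      obtain ⟨ν, hacc, hiff⟩ := hs
      have hmem : ([] : List Bool) ∈ nodeFin T := nil_mem_nodeFin T
      have hrun : runp A T [] s = A.run (T.applyVal ν) := by
        unfold runp
        congr 1
        apply applyVal_congr
        intro r hr
        have h1 : r ∈ s ↔ ν r = true := by rw [hiff r]; simp [hr]
        have h2 : decide (([] : List Bool) ++ r ∈ s) = decide (ν r = true) := by
          rw [decide_eq_decide]; simpa using h1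
        simpa using h2
      have hw : wireG A T (Sum.inr (Sum.inr (Sum.inl (⟨[], hmem⟩, A.run (T.applyVal ν)))))
          (Sum.inl (Sum.inl ())) := ⟨rfl, hacc⟩
      refine Circuit.Captures.or _ rfl _ (mem_inputs.2 hw) s (ih _ s ?_ ?_)
      · have := rank_lt_of_wire hw
        simp only [rankG] at hrank this ⊢
        omega
      · simp only [Spec, Set.mem_setOf_eq]
        exact ⟨T, by simp, fun x hx => ⟨x, ((hiff x).1 hx).1, by simp⟩, hrun⟩
    · -- gEmp
      have hse : s = ∅ := hs
      subst hse
      exact captures_emp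
    · -- gVar
      have hse : s = {pv.1} := hs
      subst hse
      exact Circuit.Captures.var (C := circ A T) (Sum.inr (Sum.inl pv)) rfl
    · -- gSt
      simp only [Spec, Set.mem_setOf_eq] at hs
      obtain ⟨u, hu, helem, hrun⟩ := hs
      cases u with
      | leaf a =>
        rw [runp_leaf] at hrun
        by_cases hp : p.1 ∈ s
        · have hse : s = {p.1} := by
            apply Finset.ext
            intro x
            simp only [Finset.mem_singleton]
            constructor
            · intro hx
              obtain ⟨r, hr, hxr⟩ := helem x hx
              cases r with
              | nil => simpa using hxr
              | cons b r' => exact absurd hr (by simp [BTree.IsLeafPos])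
            · rintro rfl; exact hp
          have hq : A.init (a, true) = q := by simpa [hp] using hrun
          subst hse
          have hlv : p.1 ∈ leafFin T := mem_leafFin.2 ⟨a, hu⟩
          have hw : wireG A T (Sum.inr (Sum.inl (⟨p.1, hlv⟩ : LPos T)))
              (Sum.inr (Sum.inr (Sum.inl (p, q)))) := ⟨rfl, a, hu, hq⟩
          refine Circuit.Captures.or _ rfl _ (mem_inputs.2 hw) _ ?_
          exact Circuit.Captures.var (C := circ A T) (Sum.inr (Sum.inl ⟨p.1, hlv⟩)) rfl
        · have hse : s = ∅ := by
            apply Finset.eq_empty_iff_forall_notMem.2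
            intro x hx
            obtain ⟨r, hr, hxr⟩ := helem x hx
            cases r with
            | nil =>
              apply hp
              simp only [List.append_nil] at hxr
              rwa [← hxr]
            | cons b r' => exact absurd hr (by simp [BTree.IsLeafPos])
          have hq : A.init (a, false) = q := by
            subst hse
            simpa [hp] using hrun
          subst hse
          have hw : wireG A T (Sum.inl (Sum.inr ()))
              (Sum.inr (Sum.inr (Sum.inl (p, q)))) := ⟨a, hu, hq⟩
          exact Circuit.Captures.or _ rfl _ (mem_inputs.2 hw) _ captures_emp
      | node a l r =>
        have hq : A.delta (a, false)
            (runp A l (p.1 ++ [false]) s) (runp A r (p.1 ++ [true]) s) = q := by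
          rw [← runp_node]; exact hrun
        have hsplit : s = s.filter (fun x => p.1 ++ [false] <+: x) ∪
            s.filter (fun x => p.1 ++ [true] <+: x) := by
          apply Finset.ext
          intro x
          simp only [Finset.mem_union, Finset.mem_filter]
          constructor
          · intro hx
            obtain ⟨rr, hrr, hxr⟩ := helem x hx
            cases rr with
            | nil => exact absurd hrr (by simp [BTree.IsLeafPos])
            | cons b rr' =>
              cases b
              · exact Or.inl ⟨hx, ⟨rr', by simp [hxr]⟩⟩
              · exact Or.inr ⟨hx, ⟨rr', by simp [hxr]⟩⟩
          · tauto
        have hself1 : ∀ x ∈ s.filter (fun x => p.1 ++ [false] <+: x),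
            ∃ rr, l.IsLeafPos rr ∧ x = (p.1 ++ [false]) ++ rr := by
          intro x hx
          rw [Finset.mem_filter] at hx
          obtain ⟨rr, hrr, hxr⟩ := helem x hx.1
          cases rr with
          | nil => exact absurd hrr (by simp [BTree.IsLeafPos])
          | cons b rr' =>
            cases b
            · exact ⟨rr', hrr, by simp [hxr]⟩
            · obtain ⟨tt, htt⟩ := hx.2
              subst hxr
              simp [List.append_assoc] at htt
        have hself2 : ∀ x ∈ s.filter (fun x => p.1 ++ [true] <+: x),
            ∃ rr, r.IsLeafPos rr ∧ x = (p.1 ++ [true]) ++ rr := by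
          intro x hx
          rw [Finset.mem_filter] at hx
          obtain ⟨rr, hrr, hxr⟩ := helem x hx.1
          cases rr with
          | nil => exact absurd hrr (by simp [BTree.IsLeafPos])
          | cons b rr' =>
            cases b
            · obtain ⟨tt, htt⟩ := hx.2
              subst hxr
              simp [List.append_assoc] at htt
            · exact ⟨rr', hrr, by simp [hxr]⟩
        have hrun1 : runp A l (p.1 ++ [false]) (s.filter (fun x => p.1 ++ [false] <+: x)) =
            runp A l (p.1 ++ [false]) s := by
          apply runp_congr
          intro rr _
          simp only [Finset.mem_filter]
          exact ⟨And.left, fun hx => ⟨hx, ⟨rr, rfl⟩⟩⟩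
        have hrun2 : runp A r (p.1 ++ [true]) (s.filter (fun x => p.1 ++ [true] <+: x)) =
            runp A r (p.1 ++ [true]) s := by
          apply runp_congr
          intro rr _
          simp only [Finset.mem_filter]
          exact ⟨And.left, fun hx => ⟨hx, ⟨rr, rfl⟩⟩⟩
        have hw : wireG A T
            (Sum.inr (Sum.inr (Sum.inr (p, runp A l (p.1 ++ [false]) s,
              runp A r (p.1 ++ [true]) s))))
            (Sum.inr (Sum.inr (Sum.inl (p, q)))) := ⟨rfl, a, l, r, hu, hq⟩
        refine Circuit.Captures.or _ rfl _ (mem_inputs.2 hw) s (ih _ s ?_ ?_)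
        · have := rank_lt_of_wire hw
          omega
        · simp only [Spec, Set.mem_setOf_eq]
          exact Or.inr ⟨a, l, r, hu, _, _, ⟨hself1, hrun1⟩, ⟨hself2, hrun2⟩, hsplit⟩
    · -- gAnd
      simp only [Spec, Set.mem_setOf_eq] at hs
      rcases hs with ⟨⟨a, ha⟩, hse⟩ | ⟨a, l, r, hsub, s1, s2, hsem1, hsem2, hse⟩
      · subst hse
        have hcap := Circuit.Captures.and (C := circ A T)
          (Sum.inr (Sum.inr (Sum.inr (p, q1, q2)))) rfl (fun _ => ∅) (fun g' hg' => by
            rw [inputs_and_leaf p q1 q2 ha] at hg'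
            exact absurd hg' (Finset.notMem_empty _))
        rwa [inputs_and_leaf p q1 q2 ha, Finset.biUnion_empty] at hcap
      · subst hse
        have hne : gSt (A := A) ⟨p.1 ++ [false], stf_mem hsub⟩ q1 ≠
            gSt ⟨p.1 ++ [true], stt_mem hsub⟩ q2 := by
          simp [gSt, Subtype.ext_iff]
        have hwf : wireG A T (gSt (A := A) ⟨p.1 ++ [false], stf_mem hsub⟩ q1)
            (Sum.inr (Sum.inr (Sum.inr (p, q1, q2)))) :=
          ⟨⟨a, l, r, hsub⟩, Or.inl ⟨rfl, rfl⟩⟩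
        have hwt : wireG A T (gSt (A := A) ⟨p.1 ++ [true], stt_mem hsub⟩ q2)
            (Sum.inr (Sum.inr (Sum.inr (p, q1, q2)))) :=
          ⟨⟨a, l, r, hsub⟩, Or.inr ⟨rfl, rfl⟩⟩
        have hcap := Circuit.Captures.and (C := circ A T)
          (Sum.inr (Sum.inr (Sum.inr (p, q1, q2)))) rfl
          (fun g' => if g' = gSt ⟨p.1 ++ [false], stf_mem hsub⟩ q1 then s1 else s2)
          (fun g' hg' => by
            rw [inputs_and_node p q1 q2 hsub] at hg'
            rcases Finset.mem_insert.1 hg' with rfl | hg'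
            · dsimp only
              rw [if_pos rfl]
              refine ih _ s1 ?_ ?_
              · have := rank_lt_of_wire hwf
                omega
              · simp only [Spec, gSt, Set.mem_setOf_eq]
                exact ⟨l, subAt_child_false hsub, hsem1⟩
            · rw [Finset.mem_singleton] at hg'
              subst hg'
              dsimp only
              rw [if_neg (Ne.symm hne)]
              refine ih _ s2 ?_ ?_
              · have := rank_lt_of_wire hwt
                omega
              · simp only [Spec, gSt, Set.mem_setOf_eq]
                exact ⟨r, subAt_child_true hsub, hsem2⟩)
        rw [inputs_and_node p q1 q2 hsub, Finset.biUnion_insert,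
          Finset.singleton_biUnion] at hcap
        dsimp only at hcap
        rw [if_pos rfl, if_neg (Ne.symm hne)] at hcap
        exact hcap

/-! ### S = Spec -/

lemma S_eq (g : Gt A T) : (circ A T).S g = Spec g :=
  Set.ext fun _ => ⟨captures_spec, spec_captures⟩

/-! ### Decomposability -/

def goodFor (v : LPos T) : Gt A T → Prop
  | .inl (.inl _) => True
  | .inl (.inr _) => False
  | .inr (.inl w) => w = v
  | .inr (.inr (.inl (p, _))) => p.1 <+: v.1
  | .inr (.inr (.inr (p, _, _))) => p.1 <+: v.1

lemma goodFor_wire {v : LPos T} {g g' : Gt A T} (h : wireG A T g g')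
    (hg : goodFor v g) : goodFor v g' := by
  rcases g with (⟨⟩ | ⟨⟩) | (pv | ⟨pc, qc⟩ | ⟨pc, qc1, qc2⟩) <;>
    rcases g' with (⟨⟩ | ⟨⟩) | (pv' | ⟨p', q'⟩ | ⟨p', q1', q2'⟩) <;>
      simp [wireG, goodFor] at h hg ⊢
  · -- var → st
    rw [← h.1, hg]
  · -- st → and
    rcases h.2 with ⟨h1, -⟩ | ⟨h1, -⟩ <;>
      exact List.IsPrefix.trans (h1 ▸ ⟨_, rfl⟩) hg
  · -- and → st
    rw [← h.1]; exact hg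

lemma reach_good {v : LPos T} {g g' : Gt A T}
    (h : Relation.ReflTransGen (wireG A T) g g') (hg : goodFor v g) : goodFor v g' := by
  induction h with
  | refl => exact hg
  | tail _ hw ih => exact goodFor_wire hw ih

lemma prefix_clash {p v : List Bool} (hf : p ++ [false] <+: v) (ht : p ++ [true] <+: v) :
    False := by
  have h1 := List.prefix_of_prefix_length_le hf ht (by simp)
  have h2 := List.IsPrefix.eq_of_length h1 (by simp)
  simpa using h2

lemma decomposable (g : Gt A T) (hg : (circ A T).typ g = GateType.and) :
    (circ A T).DecomposableAnd g := by
  intro v g1 g2 hv h1 h2 hne hr1 hr2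
  rcases v with (⟨⟩ | ⟨⟩) | (pv | ⟨pp, qq⟩ | ⟨pp, qa, qb⟩) <;> simp [circ, typG] at hv
  rcases g with (⟨⟩ | ⟨⟩) | (pv' | ⟨p, q⟩ | ⟨p, q1, q2⟩) <;> simp [circ, typG] at hg
  · rw [inputs_emp] at h1
    exact absurd h1 (Finset.notMem_empty _)
  · obtain ⟨u, hu⟩ := mem_nodeFin.1 p.2
    cases u with
    | leaf a =>
      rw [inputs_and_leaf p q1 q2 hu] at h1
      exact absurd h1 (Finset.notMem_empty _)
    | node a l r =>
      rw [inputs_and_node p q1 q2 hu] at h1 h2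
      have hgood1 := reach_good (v := pv) hr1 rfl
      have hgood2 := reach_good (v := pv) hr2 rfl
      rcases Finset.mem_insert.1 h1 with rfl | h1' <;>
        rcases Finset.mem_insert.1 h2 with rfl | h2'
      · exact hne rfl
      · rw [Finset.mem_singleton] at h2'
        subst h2'
        exact prefix_clash hgood1 hgood2
      · rw [Finset.mem_singleton] at h1'
        subst h1'
        exact prefix_clash hgood2 hgood1
      · rw [Finset.mem_singleton] at h1' h2'
        subst h1'; subst h2'
        exact hne rfl


/-! ### Determinism -/

lemma semrel_union_left {l r : BTree Γ} {p : List Bool} {s1 s2 : Finset (List Bool)}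
    {qa qb : A.Q} (h1 : SemRel A l (p ++ [false]) s1 qa)
    (h2 : SemRel A r (p ++ [true]) s2 qb) :
    runp A l (p ++ [false]) (s1 ∪ s2) = qa := by
  rw [runp_union_left (fun x hx => by
    obtain ⟨rr, -, hxr⟩ := h2.1 x hx
    exact ⟨rr, hxr⟩)]
  exact h1.2

lemma semrel_union_right {l r : BTree Γ} {p : List Bool} {s1 s2 : Finset (List Bool)}
    {qa qb : A.Q} (h1 : SemRel A l (p ++ [false]) s1 qa)
    (h2 : SemRel A r (p ++ [true]) s2 qb) :
    runp A r (p ++ [true]) (s1 ∪ s2) = qb := by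
  rw [runp_union_right (fun x hx => by
    obtain ⟨rr, -, hxr⟩ := h1.1 x hx
    exact ⟨rr, hxr⟩)]
  exact h2.2

lemma deterministic (g : Gt A T) (hg : (circ A T).typ g = GateType.or) :
    (circ A T).DeterministicOr g := by
  intro g1 g2 h1 h2 hne
  rw [mem_inputs] at h1 h2
  rw [Set.disjoint_left]
  intro s hs1 hs2
  have hc1 : s ∈ Spec g1 := captures_spec hs1
  have hc2 : s ∈ Spec g2 := captures_spec hs2
  rcases g with (⟨⟩ | ⟨⟩) | (pv | ⟨p, q⟩ | ⟨p, q1, q2⟩) <;> simp [circ, typG] at hg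
  · -- gOut
    rcases g1 with (⟨⟩ | ⟨⟩) | (pv1 | ⟨p1, qq1⟩ | ⟨p1, qa1, qb1⟩) <;> simp [wireG] at h1
    rcases g2 with (⟨⟩ | ⟨⟩) | (pv2 | ⟨p2, qq2⟩ | ⟨p2, qa2, qb2⟩) <;> simp [wireG] at h2
    simp only [Spec, Set.mem_setOf_eq] at hc1 hc2
    obtain ⟨u1, hu1, -, hrun1⟩ := hc1
    obtain ⟨u2, hu2, -, hrun2⟩ := hc2
    rw [h1.1, subAt_nil] at hu1
    rw [h2.1, subAt_nil] at hu2
    injection hu1 with hu1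
    injection hu2 with hu2
    subst hu1; subst hu2
    rw [h1.1] at hrun1
    rw [h2.1] at hrun2
    apply hne
    have hq : qq1 = qq2 := by rw [← hrun1, ← hrun2]
    have hp : p1 = p2 := Subtype.ext (by rw [h1.1, h2.1])
    rw [hq, hp]
  · -- gSt
    obtain ⟨u, hu⟩ := mem_nodeFin.1 p.2
    cases u with
    | leaf a =>
      rcases g1 with (⟨⟩ | ⟨⟩) | (pv1 | ⟨p1, qq1⟩ | ⟨p1, qa1, qb1⟩) <;>
        simp [wireG, hu] at h1 <;>
      rcases g2 with (⟨⟩ | ⟨⟩) | (pv2 | ⟨p2, qq2⟩ | ⟨p2, qa2, qb2⟩) <;>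
        simp [wireG, hu] at h2
      · exact hne rfl
      · -- g1 = emp, g2 = var
        have he1 : s = ∅ := hc1
        have he2 : s = {pv2.1} := hc2
        rw [he1] at he2
        exact Finset.singleton_ne_empty _ he2.symm
      · -- g1 = var, g2 = emp
        have he1 : s = {pv1.1} := hc1
        have he2 : s = ∅ := hc2
        rw [he2] at he1
        exact Finset.singleton_ne_empty _ he1.symm
      · -- both var
        apply hne
        have : pv1 = pv2 := Subtype.ext (by rw [h1.1, h2.1])
        rw [this]
    | node a l r =>
      rcases g1 with (⟨⟩ | ⟨⟩) | (pv1 | ⟨p1, qq1⟩ | ⟨p1, qa1, qb1⟩) <;>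
        simp [wireG, hu] at h1 <;>
      rcases g2 with (⟨⟩ | ⟨⟩) | (pv2 | ⟨p2, qq2⟩ | ⟨p2, qa2, qb2⟩) <;>
        simp [wireG, hu] at h2
      -- both and-gates
      simp only [Spec, Set.mem_setOf_eq] at hc1 hc2
      rw [h1.1] at hc1
      rw [h2.1] at hc2
      rcases hc1 with ⟨⟨a', ha'⟩, -⟩ | ⟨a1, l1, r1, hsub1, s1, s2, hsem1, hsem2, hse1⟩
      · rw [hu] at ha'; exact absurd ha' (by simp)
      rcases hc2 with ⟨⟨a', ha'⟩, -⟩ | ⟨a2, l2, r2, hsub2, s1', s2', hsem1', hsem2', hse2⟩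
      · rw [hu] at ha'; exact absurd ha' (by simp)
      rw [hu] at hsub1 hsub2
      injection hsub1 with hsub1
      injection hsub2 with hsub2
      cases hsub1; cases hsub2
      apply hne
      have e1 : qa1 = qa2 := by
        rw [← semrel_union_left hsem1 hsem2, ← semrel_union_left hsem1' hsem2',
          ← hse1, ← hse2]
      have e2 : qb1 = qb2 := by
        rw [← semrel_union_right hsem1 hsem2, ← semrel_union_right hsem1' hsem2',
          ← hse1, ← hse2]
      have hp : p1 = p2 := Subtype.ext (by rw [h1.1, h2.1])
      rw [e1, e2, hp]

/-! ### Variable bijection -/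

lemma vlab_bijOn : Set.BijOn (circ A T).vlab
    {g : (circ A T).Gate | (circ A T).typ g = GateType.var}
    {p : List Bool | T.IsLeafPos p} := by
  refine ⟨?_, ?_, ?_⟩
  · intro g hg
    rcases g with (⟨⟩ | ⟨⟩) | (pv | ⟨p, q⟩ | ⟨p, q1, q2⟩) <;>
      simp [circ, typG] at hg
    show T.IsLeafPos (vlabG A T (Sum.inr (Sum.inl pv)))
    exact isLeafPos_iff.2 pv.2
  · intro g1 hg1 g2 hg2 heq
    rcases g1 with (⟨⟩ | ⟨⟩) | (pv1 | ⟨p, q⟩ | ⟨p, q1, q2⟩) <;>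
      simp [circ, typG] at hg1
    rcases g2 with (⟨⟩ | ⟨⟩) | (pv2 | ⟨p, q⟩ | ⟨p, q1, q2⟩) <;>
      simp [circ, typG] at hg2
    have : pv1.1 = pv2.1 := heq
    rw [Subtype.ext this]
  · intro p hp
    exact ⟨Sum.inr (Sum.inl ⟨p, isLeafPos_iff.1 hp⟩), rfl, rfl⟩

/-! ### Size -/

variable (A T)

def labAt (p : List Bool) : Γ :=
  match subAt T p with
  | some (.leaf a) => a
  | some (.node a _ _) => a
  | none => rootLab T

lemma labAt_leaf {p : List Bool} {a : Γ} (h : subAt T p = some (.leaf a)) :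
    labAt T p = a := by simp [labAt, h]

lemma labAt_node {p : List Bool} {a : Γ} {l r : BTree Γ}
    (h : subAt T p = some (.node a l r)) : labAt T p = a := by simp [labAt, h]

abbrev W : Type :=
  (LPos T ⊕ NPos T) ⊕ ((NPos T × A.Q × A.Q) ⊕ ((NPos T × A.Q × A.Q × Bool) ⊕ A.Q))

def hW : W A T → Gt A T × Gt A T
  | .inl (.inl pv) =>
      (Sum.inr (Sum.inl pv),
       Sum.inr (Sum.inr (Sum.inl (⟨pv.1, leafFin_subset_nodeFin T pv.2⟩,
         A.init (labAt T pv.1, true)))))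
  | .inl (.inr p) =>
      (Sum.inl (Sum.inr ()),
       Sum.inr (Sum.inr (Sum.inl (p, A.init (labAt T p.1, false)))))
  | .inr (.inl (p, qq1, qq2)) =>
      (Sum.inr (Sum.inr (Sum.inr (p, qq1, qq2))),
       Sum.inr (Sum.inr (Sum.inl (p, A.delta (labAt T p.1, false) qq1 qq2))))
  | .inr (.inr (.inl (p, qq1, qq2, b))) =>
      if hb : p.1 ++ [b] ∈ nodeFin T then
        (Sum.inr (Sum.inr (Sum.inl (⟨p.1 ++ [b], hb⟩, cond b qq2 qq1))),
         Sum.inr (Sum.inr (Sum.inr (p, qq1, qq2))))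
      else (Sum.inl (Sum.inl ()), Sum.inl (Sum.inl ()))
  | .inr (.inr (.inr q)) =>
      (Sum.inr (Sum.inr (Sum.inl (⟨[], nil_mem_nodeFin T⟩, q))), Sum.inl (Sum.inl ()))

variable {A T}

lemma wire_subset_range :
    {e : Gt A T × Gt A T | wireG A T e.1 e.2} ⊆ Set.range (hW A T) := by
  rintro ⟨g, g'⟩ hw
  simp only [Set.mem_setOf_eq] at hw
  rcases g' with (⟨⟩ | ⟨⟩) | (pv' | ⟨p', q'⟩ | ⟨p', q1', q2'⟩) <;>
    rcases g with (⟨⟩ | ⟨⟩) | (pv | ⟨p, qq⟩ | ⟨p, qq1, qq2⟩) <;>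
      simp only [wireG] at hw <;> try exact hw.elim
  · -- st → out
    refine ⟨Sum.inr (Sum.inr (Sum.inr qq)), ?_⟩
    simp only [hW]
    rw [show (⟨[], nil_mem_nodeFin T⟩ : NPos T) = p from Subtype.ext hw.1.symm]
  · -- emp → st
    obtain ⟨a, ha, hq⟩ := hw
    refine ⟨Sum.inl (Sum.inr p'), ?_⟩
    simp only [hW]
    have h4 : A.init (labAt T p'.1, false) = q' := by rw [labAt_leaf T ha]; exact hq
    rw [h4]
  · -- var → st
    obtain ⟨hp, a, ha, hq⟩ := hw
    refine ⟨Sum.inl (Sum.inl pv), ?_⟩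
    simp only [hW]
    have h4 : A.init (labAt T pv.1, true) = q' := by rw [hp, labAt_leaf T ha]; exact hq
    have h3 : (⟨pv.1, leafFin_subset_nodeFin T pv.2⟩ : NPos T) = p' := Subtype.ext hp
    rw [h4, h3]
  · -- and → st
    obtain ⟨hp, a, l, r, hnode, hq⟩ := hw
    refine ⟨Sum.inr (Sum.inl (p, qq1, qq2)), ?_⟩
    simp only [hW]
    have h4 : A.delta (labAt T p.1, false) qq1 qq2 = q' := by
      rw [hp, labAt_node T hnode]; exact hq
    rw [h4, show (p : NPos T) = p' from Subtype.ext hp]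
  · -- st → and
    obtain ⟨⟨a, l, r, hnode⟩, hdisj⟩ := hw
    rcases hdisj with ⟨h1, h2⟩ | ⟨h1, h2⟩
    · refine ⟨Sum.inr (Sum.inr (Sum.inl (p', q1', q2', false))), ?_⟩
      simp only [hW]
      rw [dif_pos (stf_mem hnode)]
      rw [show (⟨p'.1 ++ [false], stf_mem hnode⟩ : NPos T) = p from Subtype.ext h1.symm]
      rw [show (cond false q2' q1' : A.Q) = qq from h2.symm]
    · refine ⟨Sum.inr (Sum.inr (Sum.inl (p', q1', q2', true))), ?_⟩
      simp only [hW]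
      rw [dif_pos (stt_mem hnode)]
      rw [show (⟨p'.1 ++ [true], stt_mem hnode⟩ : NPos T) = p from Subtype.ext h1.symm]
      rw [show (cond true q2' q1' : A.Q) = qq from h2.symm]

lemma wire_ncard_le :
    {e : Gt A T × Gt A T | wireG A T e.1 e.2}.ncard ≤ Fintype.card (W A T) := by
  calc {e : Gt A T × Gt A T | wireG A T e.1 e.2}.ncard
      ≤ (Set.range (hW A T)).ncard :=
        Set.ncard_le_ncard wire_subset_range (Set.finite_range _)
    _ = ((hW A T) '' Set.univ).ncard := by rw [Set.image_univ]
    _ ≤ (Set.univ : Set (W A T)).ncard := Set.ncard_image_le Set.finite_univ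
    _ = Fintype.card (W A T) := by rw [Set.ncard_univ, Nat.card_eq_fintype_card]

/-! ### Packaging -/

lemma circ_dDNNF : (circ A T).dDNNF := ⟨decomposable, deterministic⟩

lemma circ_captured : (circ A T).captured = assignSet A T := S_eq (Sum.inl (Sum.inl ()))

lemma circ_size_eq : (circ A T).size =
    Fintype.card (Gt A T) +
      {e : Gt A T × Gt A T | wireG A T e.1 e.2}.ncard := by
  unfold Circuit.size
  congr 1

end Stmt13

/-- There is a universal constant `c` such that for every finite alphabet `Γ`, every
bottom-up deterministic tree automaton `A` on full binary trees over `Γ × Bool`, and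
every full binary `Γ`-tree `T`, there exists a monotone circuit `C` whose variable
gates are in bijection with the leaves of `T`, which is a d-DNNF in zero-suppressed
semantics, such that `S(C)` equals the assignment set `α(A, T)` and
`|C| ≤ c·|Γ|·|Q|²·|T|`. -/
theorem stmt13 :
    ∃ c : ℕ, 0 < c ∧
      ∀ (Γ : Type) [Fintype Γ] (A : BDTA (Γ × Bool)) (T : BTree Γ),
        ∃ C : Circuit (List Bool),
          C.dDNNF ∧
          Set.BijOn C.vlab {g : C.Gate | C.typ g = GateType.var}
            {p : List Bool | T.IsLeafPos p} ∧
          C.captured = assignSet A T ∧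
          C.size ≤ c * Fintype.card Γ * Fintype.card A.Q ^ 2 * T.size := by
  refine ⟨16, by norm_num, ?_⟩
  intro Γ _ A T
  refine ⟨Stmt13.circ A T, Stmt13.circ_dDNNF, Stmt13.vlab_bijOn, Stmt13.circ_captured, ?_⟩
  have hN1 : 1 ≤ (Stmt13.nodeFin T).card :=
    Finset.card_pos.2 ⟨[], Stmt13.nil_mem_nodeFin T⟩
  have hNle : (Stmt13.nodeFin T).card ≤ T.size := Stmt13.card_nodeFin_le T
  have hLle : (Stmt13.leafFin T).card ≤ (Stmt13.nodeFin T).card :=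
    Finset.card_le_card (Stmt13.leafFin_subset_nodeFin T)
  have hq1 : 1 ≤ Fintype.card A.Q :=
    Fintype.card_pos_iff.2 ⟨A.run (T.applyVal fun _ => false)⟩
  have hγ1 : 1 ≤ Fintype.card Γ := Fintype.card_pos_iff.2 ⟨Stmt13.rootLab T⟩
  have hNpos : 1 ≤ T.size := Stmt13.one_le_size T
  set L := (Stmt13.leafFin T).card with hL
  set N' := (Stmt13.nodeFin T).card with hN'
  set n := Fintype.card A.Q with hn
  set N := T.size with hNs
  have hnn : 1 ≤ n * n := by
    have := Nat.mul_le_mul hq1 hq1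
    simpa using this
  have hG : Fintype.card (Stmt13.Gt A T) = 2 + L + N' * n + N' * (n * n) := by
    simp only [Stmt13.Gt, Fintype.card_sum, Fintype.card_prod, Fintype.card_coe,
      Fintype.card_unit]
    rw [hL, hN', hn]
    ring
  have hWc : Fintype.card (Stmt13.W A T) = L + N' + N' * (n * n) + N' * (n * n) * 2 + n := by
    simp only [Stmt13.W, Fintype.card_sum, Fintype.card_prod, Fintype.card_coe,
      Fintype.card_bool]
    rw [hL, hN', hn]
    ring
  have hstep : (Stmt13.circ A T).size ≤
      Fintype.card (Stmt13.Gt A T) + Fintype.card (Stmt13.W A T) := by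
    rw [Stmt13.circ_size_eq]
    exact Nat.add_le_add_left Stmt13.wire_ncard_le _
  have eNnn : N' * (n * n) ≤ N * (n * n) := Nat.mul_le_mul hNle (le_refl _)
  have hNmul : N ≤ N * (n * n) := Nat.le_mul_of_pos_right N (by omega)
  have hnmul : n ≤ n * n := Nat.le_mul_of_pos_left n hq1
  have eL : L ≤ N * (n * n) := le_trans (le_trans hLle hNle) hNmul
  have eN' : N' ≤ N * (n * n) := le_trans hNle hNmul
  have eN'n : N' * n ≤ N * (n * n) := Nat.mul_le_mul hNle hnmul
  have en : n ≤ N * (n * n) := le_trans hnmul (Nat.le_mul_of_pos_left (n * n) hNpos)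
  have e1 : 1 ≤ N * (n * n) := le_trans hNpos hNmul
  have htot : (Stmt13.circ A T).size ≤ 11 * (N * (n * n)) := by
    refine le_trans hstep ?_
    rw [hG, hWc]
    linarith
  refine le_trans htot ?_
  have h11 : 11 * (N * (n * n)) ≤ (16 * Fintype.card Γ) * (N * (n * n)) :=
    Nat.mul_le_mul (by omega) (le_refl _)
  refine le_trans h11 (le_of_eq ?_)
  rw [hn, hNs]
  ring
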